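/- The function λ_i is twice differentiable on (0,∞), and its second derivative satisfies |λ_i''(r)| ≤ 8·√2·T for every r > 0. -/

import Mathlib

open Real

/-- `u(r) = (1-ε)+(T-ε)r²`. -/
noncomputable def uu (ε T r : ℝ) : ℝ := (1 - ε) + (T - ε) * r ^ 2

/-- The ion dispersion relation `λ_i`. -/
noncomputable def lamI (ε T r : ℝ) : ℝ :=
  (Real.sqrt ε)⁻¹ *
    Real.sqrt (((1 + ε) + (T + ε) * r ^ 2 - Real.sqrt ((uu ε T r) ^ 2 + 4 * ε)) / 2)

/-- The electron dispersion relation `λ_e`. -/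
noncomputable def lamE (ε T r : ℝ) : ℝ :=
  (Real.sqrt ε)⁻¹ *
    Real.sqrt (((1 + ε) + (T + ε) * r ^ 2 + Real.sqrt ((uu ε T r) ^ 2 + 4 * ε)) / 2)

/-- `H₁(r) = √(1+r²)`. -/
noncomputable def H1 (r : ℝ) : ℝ := Real.sqrt (1 + r ^ 2)

/-- `H_ε(r) = ε^{-1/2}√(1+Tr²)`. -/
noncomputable def Heps (ε T r : ℝ) : ℝ := (Real.sqrt ε)⁻¹ * Real.sqrt (1 + T * r ^ 2)

noncomputable def vv (ε T r : ℝ) : ℝ := Real.sqrt ((uu ε T r) ^ 2 + 4 * ε)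
noncomputable def ww (ε T r : ℝ) : ℝ := uu ε T r + vv ε T r
noncomputable def gg (ε T r : ℝ) : ℝ := 1 + r ^ 2 - 2 / ww ε T r
noncomputable def DD (ε T r : ℝ) : ℝ := 1 + 2 * (T - ε) / (vv ε T r * ww ε T r)

variable {ε T r : ℝ}

lemma u_ge (hε' : ε ≤ 1 / 1000) (hT : 1 ≤ T) : 1 - ε ≤ uu ε T r := by
  have h1 : 0 ≤ (T - ε) * r ^ 2 := by nlinarith [sq_nonneg r]
  simp only [uu]; linarith

lemma u_pos (hε' : ε ≤ 1 / 1000) (hT : 1 ≤ T) : 0 < uu ε T r :=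
  lt_of_lt_of_le (by linarith) (u_ge hε' hT)

lemma v_sq (hε : 0 < ε) : (vv ε T r) ^ 2 = (uu ε T r) ^ 2 + 4 * ε := by
  have : (0:ℝ) ≤ (uu ε T r) ^ 2 + 4 * ε := by positivity
  simp [vv, sq_sqrt this]

lemma v_ge (hε : 0 < ε) (hε' : ε ≤ 1 / 1000) (hT : 1 ≤ T) : 1 + ε ≤ vv ε T r := by
  have hu := u_ge (r := r) hε' hT
  have : (1 + ε) ^ 2 ≤ (uu ε T r) ^ 2 + 4 * ε := by nlinarith
  calc 1 + ε = Real.sqrt ((1 + ε) ^ 2) := by rw [Real.sqrt_sq (by linarith)]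
    _ ≤ vv ε T r := Real.sqrt_le_sqrt this

lemma v_pos (hε : 0 < ε) (hε' : ε ≤ 1 / 1000) (hT : 1 ≤ T) : 0 < vv ε T r :=
  lt_of_lt_of_le (by linarith) (v_ge hε hε' hT)

lemma v_ge_u (hε : 0 < ε) (hε' : ε ≤ 1 / 1000) (hT : 1 ≤ T) : uu ε T r ≤ vv ε T r := by
  have hu := u_pos (r := r) hε' hT
  calc uu ε T r = Real.sqrt ((uu ε T r) ^ 2) := by rw [Real.sqrt_sq hu.le]
    _ ≤ vv ε T r := Real.sqrt_le_sqrt (by nlinarith)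

lemma v_le (hε : 0 < ε) (hε' : ε ≤ 1 / 1000) (hT : 1 ≤ T) : vv ε T r ≤ uu ε T r + 2 * ε := by
  have hu := u_ge (r := r) hε' hT
  calc vv ε T r ≤ Real.sqrt ((uu ε T r + 2 * ε) ^ 2) := Real.sqrt_le_sqrt (by nlinarith)
    _ = uu ε T r + 2 * ε := Real.sqrt_sq (by linarith)

lemma w_ge (hε : 0 < ε) (hε' : ε ≤ 1 / 1000) (hT : 1 ≤ T) : 2 ≤ ww ε T r := by
  have h1 := u_ge (r := r) hε' hT
  have h2 := v_ge (r := r) hε hε' hT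
  simp only [ww]; linarith

lemma w_pos (hε : 0 < ε) (hε' : ε ≤ 1 / 1000) (hT : 1 ≤ T) : 0 < ww ε T r :=
  lt_of_lt_of_le (by norm_num) (w_ge hε hε' hT)

lemma g_ge (hε : 0 < ε) (hε' : ε ≤ 1 / 1000) (hT : 1 ≤ T) : r ^ 2 ≤ gg ε T r := by
  have h2 := w_ge (r := r) hε hε' hT
  have : 2 / ww ε T r ≤ 1 := by rw [div_le_one (by linarith)]; linarith
  simp only [gg]; linarith

lemma g_pos (hε : 0 < ε) (hε' : ε ≤ 1 / 1000) (hT : 1 ≤ T) (hr : 0 < r) : 0 < gg ε T r :=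
  lt_of_lt_of_le (by positivity) (g_ge hε hε' hT)

/-- The key rewrite: `lamI = √(gg)`. -/
lemma lamI_eq (hε : 0 < ε) (hε' : ε ≤ 1 / 1000) (hT : 1 ≤ T) :
    lamI ε T r = Real.sqrt (gg ε T r) := by
  have hw := w_pos (r := r) hε hε' hT
  have hv2 := v_sq (ε := ε) (T := T) (r := r) hε
  have key : ((1 + ε) + (T + ε) * r ^ 2 - vv ε T r) / 2 = ε * gg ε T r := by
    have hvu : vv ε T r - uu ε T r = 4 * ε / ww ε T r := by
      rw [eq_div_iff (ne_of_gt hw)]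
      have h4 : (vv ε T r - uu ε T r) * (vv ε T r + uu ε T r) = 4 * ε := by nlinarith [hv2]
      calc (vv ε T r - uu ε T r) * ww ε T r
          = (vv ε T r - uu ε T r) * (vv ε T r + uu ε T r) := by rw [ww]; ring
        _ = 4 * ε := h4
    have hexp : (1 + ε) + (T + ε) * r ^ 2 - vv ε T r
        = 2 * ε * (1 + r ^ 2) - (vv ε T r - uu ε T r) := by
      simp only [uu]; ring
    rw [hexp, hvu]
    simp only [gg]
    field_simp
    ring
  rw [lamI, ← vv, key, Real.sqrt_mul hε.le, ← mul_assoc,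
    inv_mul_cancel₀ (by positivity), one_mul]

noncomputable def FF (ε T r : ℝ) : ℝ := r * DD ε T r / Real.sqrt (gg ε T r)
noncomputable def PHI (ε T r : ℝ) : ℝ :=
  DD ε T r * (gg ε T r - r ^ 2 * DD ε T r) / (gg ε T r * Real.sqrt (gg ε T r))
    - 4 * (T - ε) ^ 2 * r ^ 2 / ((vv ε T r) ^ 3 * Real.sqrt (gg ε T r))

lemma hasDerivAt_u : HasDerivAt (uu ε T) (2 * (T - ε) * r) r := by
  have h : HasDerivAt (fun x : ℝ => (1 - ε) + (T - ε) * x ^ 2) ((T - ε) * (2 * r ^ 1)) r :=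
    (((hasDerivAt_pow 2 r)).const_mul (T - ε)).const_add (1 - ε)
  have he : (T - ε) * (2 * r ^ 1) = 2 * (T - ε) * r := by ring
  rw [he] at h
  exact h

lemma hasDerivAt_v (hε : 0 < ε) (hε' : ε ≤ 1 / 1000) (hT : 1 ≤ T) :
    HasDerivAt (vv ε T) (2 * (T - ε) * r * uu ε T r / vv ε T r) r := by
  have hvpos := v_pos (r := r) hε hε' hT
  have h1 : HasDerivAt (fun x => (uu ε T x) ^ 2 + 4 * ε)
      (2 * uu ε T r ^ 1 * (2 * (T - ε) * r)) r :=
    ((hasDerivAt_u (ε := ε) (T := T) (r := r)).pow 2).add_const (4 * ε)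
  have h2 : ((uu ε T r) ^ 2 + 4 * ε) ≠ 0 := by positivity
  have h3 := h1.sqrt h2
  have : Real.sqrt ((uu ε T r) ^ 2 + 4 * ε) = vv ε T r := rfl
  rw [this] at h3
  refine h3.congr_deriv (Eq.symm ?_)
  rw [div_eq_div_iff (by positivity) (by positivity)]
  ring

lemma hasDerivAt_w (hε : 0 < ε) (hε' : ε ≤ 1 / 1000) (hT : 1 ≤ T) :
    HasDerivAt (ww ε T) (2 * (T - ε) * r * ww ε T r / vv ε T r) r := by
  have hvpos := v_pos (r := r) hε hε' hT
  have h := (hasDerivAt_u (ε := ε) (T := T) (r := r)).add (hasDerivAt_v hε hε' hT)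
  have he : (uu ε T + vv ε T) = ww ε T := rfl
  rw [he] at h
  refine h.congr_deriv (Eq.symm ?_)
  rw [ww]
  field_simp
  ring

lemma hasDerivAt_g (hε : 0 < ε) (hε' : ε ≤ 1 / 1000) (hT : 1 ≤ T) :
    HasDerivAt (gg ε T) (2 * r * DD ε T r) r := by
  have hvpos := v_pos (r := r) hε hε' hT
  have hwpos := w_pos (r := r) hε hε' hT
  have h1 : HasDerivAt (fun x : ℝ => 1 + x ^ 2) (2 * r ^ 1) r :=
    (hasDerivAt_pow 2 r).const_add 1
  have h2 : HasDerivAt (fun x => 2 / ww ε T x)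
      ((0 * ww ε T r - 2 * (2 * (T - ε) * r * ww ε T r / vv ε T r)) / (ww ε T r) ^ 2) r :=
    (hasDerivAt_const r 2).div (hasDerivAt_w hε hε' hT) (ne_of_gt hwpos)
  have h := h1.sub h2
  have he : ((fun x : ℝ => (1 + x ^ 2)) - fun x => 2 / ww ε T x) = gg ε T := by
    rfl
  rw [he] at h
  refine h.congr_deriv (Eq.symm ?_)
  rw [DD]
  field_simp
  ring

lemma hasDerivAt_lamI (hε : 0 < ε) (hε' : ε ≤ 1 / 1000) (hT : 1 ≤ T) (hr : 0 < r) :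
    HasDerivAt (lamI ε T) (FF ε T r) r := by
  have hg := g_pos (r := r) hε hε' hT hr
  have h := (hasDerivAt_g (r := r) hε hε' hT).sqrt (ne_of_gt hg)
  have he : (fun x => Real.sqrt (gg ε T x)) = lamI ε T := by
    funext x; rw [lamI_eq hε hε' hT]
  rw [he] at h
  convert h using 1
  rw [FF, DD]
  have hS : Real.sqrt (gg ε T r) ≠ 0 := by positivity
  have hvpos := v_pos (r := r) hε hε' hT
  have hwpos := w_pos (r := r) hε hε' hT
  field_simp

lemma hasDerivAt_D (hε : 0 < ε) (hε' : ε ≤ 1 / 1000) (hT : 1 ≤ T) :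
    HasDerivAt (DD ε T) (-(4 * (T - ε) ^ 2 * r / (vv ε T r) ^ 3)) r := by
  have hvpos := v_pos (r := r) hε hε' hT
  have hwpos := w_pos (r := r) hε hε' hT
  have hv2 := v_sq (ε := ε) (T := T) (r := r) hε
  have hmul := (hasDerivAt_v (r := r) hε hε' hT).mul (hasDerivAt_w (r := r) hε hε' hT)
  have h2 : HasDerivAt (fun x => 2 * (T - ε) / (vv ε T x * ww ε T x))
      ((0 * (vv ε T r * ww ε T r) - 2 * (T - ε) *
        (2 * (T - ε) * r * uu ε T r / vv ε T r * ww ε T r +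
          vv ε T r * (2 * (T - ε) * r * ww ε T r / vv ε T r))) / (vv ε T r * ww ε T r) ^ 2) r :=
    (hasDerivAt_const r (2 * (T - ε))).div hmul (by positivity)
  have h := h2.const_add 1
  have he : (fun x => 1 + 2 * (T - ε) / (vv ε T x * ww ε T x)) = DD ε T := rfl
  rw [he] at h
  refine h.congr_deriv (Eq.symm ?_)
  simp only [ww] at *
  field_simp
  ring

lemma hasDerivAt_F (hε : 0 < ε) (hε' : ε ≤ 1 / 1000) (hT : 1 ≤ T) (hr : 0 < r) :
    HasDerivAt (FF ε T) (PHI ε T r) r := by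
  have hg := g_pos (r := r) hε hε' hT hr
  have hvpos := v_pos (r := r) hε hε' hT
  have hS : (0:ℝ) < Real.sqrt (gg ε T r) := Real.sqrt_pos.mpr hg
  have hrd : HasDerivAt (fun x => x * DD ε T x)
      (1 * DD ε T r + r * -(4 * (T - ε) ^ 2 * r / (vv ε T r) ^ 3)) r :=
    (hasDerivAt_id r).mul (hasDerivAt_D hε hε' hT)
  have hsq : HasDerivAt (fun x => Real.sqrt (gg ε T x))
      (2 * r * DD ε T r / (2 * Real.sqrt (gg ε T r))) r :=
    (hasDerivAt_g hε hε' hT).sqrt (ne_of_gt hg)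
  have h := hrd.div hsq (ne_of_gt hS)
  have he : ((fun x => x * DD ε T x) / fun x => Real.sqrt (gg ε T x)) = FF ε T := rfl
  rw [he] at h
  refine h.congr_deriv (Eq.symm ?_)
  rw [PHI]
  have hS2 : Real.sqrt (gg ε T r) ^ 2 = gg ε T r := Real.sq_sqrt hg.le
  set S := Real.sqrt (gg ε T r) with hSdef
  rw [← hS2]
  field_simp
  ring

/-! ### Pure arithmetic auxiliary lemmas (tiny contexts) -/

private lemma aux_nonneg_of_mul {x y : ℝ} (h : 0 ≤ x * y) (hy : 0 < y) : 0 ≤ x := by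
  nlinarith

private lemma aux_le_of_mul_le_mul {x z y : ℝ} (h : x * y ≤ z * y) (hy : 0 < y) : x ≤ z := by
  nlinarith

private lemma aux_le_of_sq_le_sq {x b : ℝ} (h : x ^ 2 ≤ b ^ 2) (hx : 0 ≤ x) (hb : 0 < b) :
    x ≤ b := by nlinarith

private lemma aux_Y_bounds {ε a V : ℝ} (hε : 0 < ε) (hε' : ε ≤ 1 / 1000) (ha : 0 < a)
    (hVge : 1 + ε ≤ V) (hVle : V ≤ 1 + ε + a)
    (hv2 : V ^ 2 = (1 - ε + a) ^ 2 + 4 * ε) :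
    0 ≤ V * ((1 - ε + a) + V) - 2 * V - 2 * a ∧
      V * ((1 - ε + a) + V) - 2 * V - 2 * a ≤ a ^ 2 * (2 + a) := by
  have key : (V * ((1 - ε + a) + V) - 2 * V - 2 * a) * (V + 1 + ε)
      = a * ((1 - ε + a) * V + a ^ 2 + 2 * a * (1 - ε) - (1 - ε ^ 2)) := by
    linear_combination (V + a) * hv2
  have hWpos : (0:ℝ) < V + 1 + ε := by linarith
  constructor
  · have hinner : a * (3 - ε + a) ≤ (1 - ε + a) * V + a ^ 2 + 2 * a * (1 - ε) - (1 - ε ^ 2) := by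
      nlinarith [mul_le_mul_of_nonneg_left hVge (by linarith : (0:ℝ) ≤ 1 - ε + a)]
    have hrhs : 0 ≤ a * ((1 - ε + a) * V + a ^ 2 + 2 * a * (1 - ε) - (1 - ε ^ 2)) := by
      nlinarith [mul_le_mul_of_nonneg_left hinner ha.le]
    nlinarith [key, hrhs]
  · have hinner : (1 - ε + a) * V + a ^ 2 + 2 * a * (1 - ε) - (1 - ε ^ 2)
        ≤ a * (4 + 2 * a) := by
      nlinarith [mul_le_mul_of_nonneg_left hVle (by linarith : (0:ℝ) ≤ 1 - ε + a)]
    have hrhs : a * ((1 - ε + a) * V + a ^ 2 + 2 * a * (1 - ε) - (1 - ε ^ 2))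
        ≤ a * (a * (4 + 2 * a)) := mul_le_mul_of_nonneg_left hinner ha.le
    nlinarith [key, hrhs]

private lemma aux_a8 {ε a V : ℝ} (hε : 0 < ε) (hε' : ε ≤ 1 / 1000) (ha : 0 < a)
    (hV : 1 - ε + a ≤ V) : a ≤ 8 * V ^ 4 := by
  have h1 : 4 * (1 - ε) * a ≤ (1 - ε + a) ^ 2 := by nlinarith [sq_nonneg (1 - ε - a)]
  have h2 : (1 - ε) ^ 2 ≤ (1 - ε + a) ^ 2 := by nlinarith
  have h3 : (1 - ε + a) ^ 4 ≤ V ^ 4 := pow_le_pow_left₀ (by linarith) hV 4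
  have h4 : (4 * (1 - ε) * a) * ((1 - ε) ^ 2) ≤ (1 - ε + a) ^ 2 * (1 - ε + a) ^ 2 :=
    mul_le_mul h1 h2 (by positivity) (by positivity)
  have h5 : 4 * (1 - ε) ^ 3 * a ≤ (1 - ε + a) ^ 4 := by nlinarith [h4]
  have h6 : (997:ℝ)/1000 ≤ (1 - ε) ^ 3 := by nlinarith [sq_nonneg ε]
  have h7 : a ≤ 4 * (1 - ε) ^ 3 * a := by nlinarith [h6, ha.le]
  have h8 : (0:ℝ) ≤ V ^ 4 := by nlinarith [sq_nonneg (V ^ 2), sq_nonneg V, pow_le_pow_left₀ (by linarith : (0:ℝ) ≤ 1 - ε + a) hV 4, h3, h5, h7]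
  nlinarith [h3, h5, h7, h8]

private lemma aux_small_case {ε a U : ℝ} (hε : 0 < ε) (hε' : ε ≤ 1 / 1000) (ha : 0 < a)
    (hcase : a ≤ 1) (hU : U = 1 - ε + a) : a * (2 + a) ^ 2 ≤ 512 * U ^ 2 := by
  have h9 : (2 + a) ^ 2 ≤ 9 := by nlinarith
  have h9' : a * (2 + a) ^ 2 ≤ 9 := by nlinarith [sq_nonneg (2 + a)]
  have hU9 : (999:ℝ)/1000 ≤ U := by rw [hU]; linarith
  have hU2 : (1:ℝ)/2 ≤ U ^ 2 := by nlinarith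
  linarith

private lemma aux_large_case {t a U : ℝ} (ht : 0 < t) (ht100 : t ≤ 100) (ha : 1 < a)
    (hU : a + 999 / 1000 ≤ U) : t * (a * (2 + a) ^ 2) ≤ 512 * U ^ 4 := by
  have ha0 : 0 < a := by linarith
  have hA1 : 3996 / 1000 * a ≤ (a + 999 / 1000) ^ 2 := by
    nlinarith [sq_nonneg (a - 999 / 1000)]
  have hA2 : a ^ 2 ≤ (a + 999 / 1000) ^ 2 := by nlinarith
  have hA3 : (3996 / 1000 * a) * a ^ 2 ≤ (a + 999 / 1000) ^ 2 * (a + 999 / 1000) ^ 2 :=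
    mul_le_mul hA1 hA2 (by positivity) (by positivity)
  have h2a3 : (2 + a) ^ 2 ≤ 9 * a ^ 2 := by nlinarith
  have hX9 : a * (2 + a) ^ 2 ≤ 9 * a ^ 3 := by nlinarith
  have hY : 0 ≤ a * (2 + a) ^ 2 := by positivity
  have hq1 : t * (a * (2 + a) ^ 2) ≤ 100 * (a * (2 + a) ^ 2) :=
    mul_le_mul_of_nonneg_right ht100 hY
  have hq3 : 900 * a ^ 3 ≤ 512 * ((a + 999 / 1000) ^ 2 * (a + 999 / 1000) ^ 2) := by
    nlinarith [hA3, pow_nonneg ha0.le 3]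
  have hU4 : (a + 999 / 1000) ^ 4 ≤ U ^ 4 := pow_le_pow_left₀ (by positivity) hU 4
  calc t * (a * (2 + a) ^ 2) ≤ 900 * a ^ 3 := by linarith
    _ ≤ 512 * (a + 999 / 1000) ^ 4 := by nlinarith [hq3]
    _ ≤ 512 * U ^ 4 := by linarith

set_option maxHeartbeats 1000000 in
lemma abs_phi_le {ε T r : ℝ} (hε : 0 < ε) (hε' : ε ≤ 1 / 1000) (hT : 1 ≤ T) (hT' : T ≤ 100)
    (hr : 0 < r) : |PHI ε T r| ≤ 8 * Real.sqrt 2 * T := by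
  have ht : 0 < T - ε := by linarith
  have ht1 : 1 - ε ≤ T - ε := by linarith
  have ht100 : T - ε ≤ 100 := by linarith
  set t := T - ε with ht_def
  set a := t * r ^ 2 with ha_def
  have ha : 0 < a := by positivity
  set U := uu ε T r with hU_def
  set V := vv ε T r with hV_def
  set W := ww ε T r with hW_def
  set G := gg ε T r with hG_def
  set D := DD ε T r with hD_def
  set S := Real.sqrt G with hS_def
  -- basic facts
  have hUa : U = 1 - ε + a := by rw [hU_def, uu]
  have hv2 : V ^ 2 = U ^ 2 + 4 * ε := v_sq hε
  have hVge : 1 + ε ≤ V := v_ge hε hε' hT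
  have hVpos : 0 < V := by linarith
  have hVu : U ≤ V := v_ge_u hε hε' hT
  have hVle : V ≤ U + 2 * ε := v_le hε hε' hT
  have hUpos : 0 < U := u_pos hε' hT
  have hWe : W = U + V := rfl
  have hWpos : 0 < W := w_pos hε hε' hT
  have hW2V : W ≤ 2 * V := by rw [hWe]; linarith
  have hWU : 2 * U ≤ W := by rw [hWe]; linarith
  have hGpos : 0 < G := g_pos hε hε' hT hr
  have hGr : r ^ 2 ≤ G := g_ge hε hε' hT
  have hSpos : 0 < S := Real.sqrt_pos.mpr hGpos
  have hS2 : S ^ 2 = G := Real.sq_sqrt hGpos.le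
  have hSr : r ≤ S := (Real.le_sqrt hr.le hGpos.le).mpr hGr
  have hGe : G = 1 + r ^ 2 - 2 / W := rfl
  have hDe : D = 1 + 2 * t / (V * W) := rfl
  have hD1 : 1 ≤ D := by
    rw [hDe]; have : 0 ≤ 2 * t / (V * W) := by positivity
    linarith
  have hDpos : 0 < D := by linarith
  have hVWpos : 0 < V * W := by positivity
  -- bounds on Y = V*W - 2V - 2a
  have hYb : 0 ≤ V * W - 2 * V - 2 * a ∧ V * W - 2 * V - 2 * a ≤ a ^ 2 * (2 + a) := by
    have h := aux_Y_bounds hε hε' ha hVge (by rw [hUa] at hVle; linarith)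
      (by rw [← hUa]; exact hv2)
    rw [hWe, hUa]
    exact h
  -- X = G - r²D
  set X := G - r ^ 2 * D with hX_def
  have hXVW : X * (V * W) = V * W - 2 * V - 2 * a := by
    rw [hX_def, hGe, hDe, ha_def, hWe]
    field_simp
    ring
  have hX0 : 0 ≤ X := aux_nonneg_of_mul (by rw [hXVW]; exact hYb.1) hVWpos
  have hXle : X * (V * W) ≤ a ^ 2 * (2 + a) := by rw [hXVW]; exact hYb.2
  have hGD : r ^ 2 * D ≤ G := by rw [hX_def] at hX0; linarith
  have hrDVW : r ^ 2 * D * (V * W) = r ^ 2 * (V * W) + 2 * a := by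
    rw [hDe, ha_def]; field_simp
  have hGVW : 2 * a ≤ G * (V * W) := by
    have h2 := mul_le_mul_of_nonneg_right hGD hVWpos.le
    rw [hrDVW] at h2
    have h3 : 0 ≤ r ^ 2 * (V * W) := by positivity
    linarith
  have hPHI : PHI ε T r = D * X / (G * S) - 4 * t ^ 2 * r ^ 2 / (V ^ 3 * S) := by
    rw [PHI, hX_def]
  set P := D * X / (G * S) with hP_def
  set N := 4 * t ^ 2 * r ^ 2 / (V ^ 3 * S) with hN_def
  have hPnn : 0 ≤ P := by positivity
  have hNnn : 0 ≤ N := by positivity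
  have hs2 : Real.sqrt 2 ^ 2 = 2 := Real.sq_sqrt (by norm_num)
  have hs2pos : 0 < Real.sqrt 2 := Real.sqrt_pos.mpr (by norm_num)
  have hB2 : (8 * Real.sqrt 2 * t) ^ 2 = 128 * t ^ 2 := by
    rw [mul_pow, mul_pow, hs2]; ring
  have hBpos : 0 < 8 * Real.sqrt 2 * t := by positivity
  -- bound on N
  have hNle : N ≤ 8 * Real.sqrt 2 * t := by
    have hN2 : N ^ 2 = 16 * t ^ 4 * r ^ 4 / (V ^ 6 * G) := by
      rw [hN_def, div_pow]
      congr 1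
      · ring
      · rw [mul_pow, ← hS2]; ring
    have ha8 : a ≤ 8 * V ^ 4 := aux_a8 hε hε' ha (by rw [← hUa]; exact hVu)
    have hGa : a ≤ G * V ^ 2 := by
      have h0 : 0 ≤ G * V := by positivity
      have h1 : G * (V * W) ≤ 2 * (G * V ^ 2) := by
        calc G * (V * W) = (G * V) * W := by ring
          _ ≤ (G * V) * (2 * V) := mul_le_mul_of_nonneg_left hW2V h0
          _ = 2 * (G * V ^ 2) := by ring
      linarith
    have hN2le : N ^ 2 ≤ 128 * t ^ 2 := by
      rw [hN2, div_le_iff₀ (by positivity)]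
      have e2 : a * a ≤ 8 * V ^ 4 * a := mul_le_mul_of_nonneg_right ha8 ha.le
      have e3 : a * V ^ 4 ≤ G * V ^ 2 * V ^ 4 := mul_le_mul_of_nonneg_right hGa (by positivity)
      calc 16 * t ^ 4 * r ^ 4 = 16 * t ^ 2 * (a * a) := by rw [ha_def]; ring
        _ ≤ 16 * t ^ 2 * (8 * V ^ 4 * a) := mul_le_mul_of_nonneg_left e2 (by positivity)
        _ = 128 * t ^ 2 * (a * V ^ 4) := by ring
        _ ≤ 128 * t ^ 2 * (G * V ^ 2 * V ^ 4) := mul_le_mul_of_nonneg_left e3 (by positivity)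
        _ = 128 * t ^ 2 * (V ^ 6 * G) := by ring
    exact aux_le_of_sq_le_sq (by rw [hB2]; exact hN2le) hNnn hBpos
  -- bound on P
  have hPle : P ≤ 8 * Real.sqrt 2 * t := by
    have hP1 : P ≤ X / (r ^ 2 * S) := by
      rw [hP_def, div_le_div_iff₀ (by positivity) (by positivity)]
      have h0 : 0 ≤ X * S := mul_nonneg hX0 hSpos.le
      calc D * X * (r ^ 2 * S) = (X * S) * (r ^ 2 * D) := by ring
        _ ≤ (X * S) * G := mul_le_mul_of_nonneg_left hGD h0
        _ = X * (G * S) := by ring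
    have hP2 : P ^ 2 ≤ X ^ 2 / (r ^ 4 * G) := by
      have h := pow_le_pow_left₀ hPnn hP1 2
      calc P ^ 2 ≤ (X / (r ^ 2 * S)) ^ 2 := h
        _ = X ^ 2 / (r ^ 4 * G) := by rw [div_pow, mul_pow, ← hS2]; ring
    have h1 : X ^ 2 * (V * W) ^ 2 ≤ (a ^ 2 * (2 + a)) ^ 2 := by
      have e0 : X ^ 2 * (V * W) ^ 2 = (X * (V * W)) * (X * (V * W)) := by ring
      have e1 : (a ^ 2 * (2 + a)) ^ 2 = (a ^ 2 * (2 + a)) * (a ^ 2 * (2 + a)) := by ring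
      rw [e0, e1]
      have hXVWnn : 0 ≤ X * (V * W) := mul_nonneg hX0 hVWpos.le
      exact mul_le_mul hXle hXle hXVWnn (by positivity)
    have hVW2U : 2 * U ^ 2 ≤ V * W := by
      calc 2 * U ^ 2 = U * (2 * U) := by ring
        _ ≤ U * W := mul_le_mul_of_nonneg_left hWU hUpos.le
        _ ≤ V * W := mul_le_mul_of_nonneg_right hVu hWpos.le
    have hgoal : X ^ 2 ≤ 128 * t ^ 2 * (r ^ 4 * G) := by
      rcases le_or_gt a 1 with hcase | hcase
      · -- small a : use G·(VW) ≥ 2a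
        have h2 : 4 * a * U ^ 2 ≤ G * (V * W) ^ 2 := by
          have h2a : 2 * a * (V * W) ≤ G * (V * W) * (V * W) :=
            mul_le_mul_of_nonneg_right hGVW hVWpos.le
          calc 4 * a * U ^ 2 = (2 * a) * (2 * U ^ 2) := by ring
            _ ≤ (2 * a) * (V * W) := mul_le_mul_of_nonneg_left hVW2U (by linarith)
            _ = 2 * a * (V * W) := by ring
            _ ≤ G * (V * W) * (V * W) := h2a
            _ = G * (V * W) ^ 2 := by ring
        have h3 : a * (2 + a) ^ 2 ≤ 512 * U ^ 2 := aux_small_case hε hε' ha hcase hUa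
        have h4 : (a ^ 2 * (2 + a)) ^ 2 ≤ 128 * t ^ 2 * r ^ 4 * (4 * a * U ^ 2) := by
          have e : (a ^ 2 * (2 + a)) ^ 2 = (a * (2 + a) ^ 2) * (t ^ 3 * r ^ 6) := by
            rw [ha_def]; ring
          have e3 : 128 * t ^ 2 * r ^ 4 * (4 * a * U ^ 2)
              = (512 * U ^ 2) * (t ^ 3 * r ^ 6) := by rw [ha_def]; ring
          rw [e, e3]
          exact mul_le_mul_of_nonneg_right h3 (by positivity)
        have h5 : X ^ 2 * (V * W) ^ 2 ≤ (128 * t ^ 2 * (r ^ 4 * G)) * (V * W) ^ 2 := by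
          calc X ^ 2 * (V * W) ^ 2 ≤ (a ^ 2 * (2 + a)) ^ 2 := h1
            _ ≤ 128 * t ^ 2 * r ^ 4 * (4 * a * U ^ 2) := h4
            _ ≤ 128 * t ^ 2 * r ^ 4 * (G * (V * W) ^ 2) :=
                mul_le_mul_of_nonneg_left h2 (by positivity)
            _ = (128 * t ^ 2 * (r ^ 4 * G)) * (V * W) ^ 2 := by ring
        exact aux_le_of_mul_le_mul h5 (by positivity)
      · -- large a : use G ≥ r²
        have h3 : t * (a * (2 + a) ^ 2) ≤ 512 * U ^ 4 :=
          aux_large_case ht ht100 hcase (by rw [hUa]; linarith)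
        have h4 : (a ^ 2 * (2 + a)) ^ 2 ≤ 128 * t ^ 2 * r ^ 6 * (4 * U ^ 4) := by
          have e : (a ^ 2 * (2 + a)) ^ 2 = (t * (a * (2 + a) ^ 2)) * (t ^ 2 * r ^ 6) := by
            rw [ha_def]; ring
          have e3 : 128 * t ^ 2 * r ^ 6 * (4 * U ^ 4) = (512 * U ^ 4) * (t ^ 2 * r ^ 6) := by
            ring
          rw [e, e3]
          exact mul_le_mul_of_nonneg_right h3 (by positivity)
        have hU4VW : 4 * U ^ 4 ≤ (V * W) ^ 2 := by
          have e : 4 * U ^ 4 = (2 * U ^ 2) * (2 * U ^ 2) := by ring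
          have e2 : (V * W) ^ 2 = (V * W) * (V * W) := by ring
          rw [e, e2]
          exact mul_le_mul hVW2U hVW2U (by positivity) (by positivity)
        have h5 : X ^ 2 * (V * W) ^ 2 ≤ (128 * t ^ 2 * r ^ 6) * (V * W) ^ 2 := by
          calc X ^ 2 * (V * W) ^ 2 ≤ (a ^ 2 * (2 + a)) ^ 2 := h1
            _ ≤ 128 * t ^ 2 * r ^ 6 * (4 * U ^ 4) := h4
            _ ≤ (128 * t ^ 2 * r ^ 6) * (V * W) ^ 2 :=
                mul_le_mul_of_nonneg_left hU4VW (by positivity)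
        have h6 : X ^ 2 ≤ 128 * t ^ 2 * r ^ 6 := aux_le_of_mul_le_mul h5 (by positivity)
        calc X ^ 2 ≤ 128 * t ^ 2 * r ^ 6 := h6
          _ = (128 * t ^ 2 * r ^ 4) * r ^ 2 := by ring
          _ ≤ (128 * t ^ 2 * r ^ 4) * G := mul_le_mul_of_nonneg_left hGr (by positivity)
          _ = 128 * t ^ 2 * (r ^ 4 * G) := by ring
    have hP2le : P ^ 2 ≤ 128 * t ^ 2 := by
      calc P ^ 2 ≤ X ^ 2 / (r ^ 4 * G) := hP2
        _ ≤ 128 * t ^ 2 := by rw [div_le_iff₀ (by positivity)]; linarith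
    exact aux_le_of_sq_le_sq (by rw [hB2]; exact hP2le) hPnn hBpos
  -- conclusion
  have htT : 8 * Real.sqrt 2 * t ≤ 8 * Real.sqrt 2 * T := by
    have h8 : (0:ℝ) ≤ 8 * Real.sqrt 2 := by positivity
    have := mul_le_mul_of_nonneg_left (by linarith : t ≤ T) h8
    linarith
  rw [hPHI]
  rw [abs_le]
  constructor
  · have : -(8 * Real.sqrt 2 * t) ≤ P - N := by linarith
    linarith
  · linarith


/-- `λ_i` is twice differentiable on `(0,∞)` with `|λ_i''(r)| ≤ 8√2 T` for every `r > 0`. -/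
theorem stmt11 (ε T : ℝ) (hε : 0 < ε) (hε' : ε ≤ 1 / 1000) (hT : 1 ≤ T) (hT' : T ≤ 100)
    (r : ℝ) (hr : 0 < r) :
    DifferentiableAt ℝ (lamI ε T) r ∧ DifferentiableAt ℝ (deriv (lamI ε T)) r ∧
      |deriv (deriv (lamI ε T)) r| ≤ 8 * Real.sqrt 2 * T := by
  have hev : deriv (lamI ε T) =ᶠ[nhds r] FF ε T :=
    Filter.eventuallyEq_of_mem (Ioi_mem_nhds hr)
      (fun x hx => (hasDerivAt_lamI hε hε' hT hx).deriv)
  have hF := hasDerivAt_F hε hε' hT hr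
  refine ⟨(hasDerivAt_lamI hε hε' hT hr).differentiableAt, ?_, ?_⟩
  · exact hF.differentiableAt.congr_of_eventuallyEq hev
  · rw [hev.deriv_eq, hF.deriv]
    exact abs_phi_le hε hε' hT hT' hr
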